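/- Let m ≥ 1, let γ > 0, n ≥ 1 and H > 0 be real numbers, let p and q be probability mass functions on {1,...,m}, and let h : {1,...,m} → ℝ take values in [0,H]. Assume (i) |Σ_i (p_i − q_i)·h_i| ≤ 2·√(V(p,h)·γ/n) + 2·H·γ/n, and (ii) |V(p,h) − V(q,h)| ≤ H²·(2·√(γ/n) + 2·γ/n). Then |Σ_i (p_i − q_i)·h_i| ≤ 2·√(V(q,h)·γ/n) + 12·H·γ/n + 10·H·γ^{3/4}/n^{3/4}. -/
import Mathlib

private lemma sqrt_add_le' (x y : ℝ) (hx : 0 ≤ x) (hy : 0 ≤ y) :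
    Real.sqrt (x + y) ≤ Real.sqrt x + Real.sqrt y := by
  have hx' := Real.sq_sqrt hx
  have hy' := Real.sq_sqrt hy
  have h1 := Real.sqrt_nonneg x
  have h2 := Real.sqrt_nonneg y
  have h3 := Real.sqrt_nonneg (x + y)
  have h4 := Real.sq_sqrt (by linarith : (0:ℝ) ≤ x + y)
  nlinarith [mul_nonneg h1 h2]

/-- The deterministic conversion inside Lemma 2 of the paper (verifying constraint (7) of
Algorithm 2): a Bernstein-type deviation bound with the variance under the true distribution
`p` implies one with the variance under the empirical distribution `q`. Here
`V(p,h) = ∑ i, p i * (h i)^2 - (∑ i, p i * h i)^2`. -/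
theorem stmt15 {ι : Type*} [Fintype ι] [Nonempty ι]
    (γ n H : ℝ) (hγ : 0 < γ) (hn : 1 ≤ n) (hH : 0 < H)
    (p q : ι → ℝ) (hp0 : ∀ i, 0 ≤ p i) (hp1 : ∑ i, p i = 1)
    (hq0 : ∀ i, 0 ≤ q i) (hq1 : ∑ i, q i = 1)
    (h : ι → ℝ) (hh0 : ∀ i, 0 ≤ h i) (hhH : ∀ i, h i ≤ H)
    (hdev : |∑ i, (p i - q i) * h i|
      ≤ 2 * Real.sqrt ((∑ i, p i * h i ^ 2 - (∑ i, p i * h i) ^ 2) * γ / n) + 2 * H * γ / n)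
    (hvar : |(∑ i, p i * h i ^ 2 - (∑ i, p i * h i) ^ 2)
        - (∑ i, q i * h i ^ 2 - (∑ i, q i * h i) ^ 2)|
      ≤ H ^ 2 * (2 * Real.sqrt (γ / n) + 2 * γ / n)) :
    |∑ i, (p i - q i) * h i|
      ≤ 2 * Real.sqrt ((∑ i, q i * h i ^ 2 - (∑ i, q i * h i) ^ 2) * γ / n)
        + 12 * H * γ / n + 10 * H * γ ^ ((3 : ℝ) / 4) / n ^ ((3 : ℝ) / 4) := by
  have hn0 : (0:ℝ) < n := lt_of_lt_of_le one_pos hn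
  set Vp := ∑ i, p i * h i ^ 2 - (∑ i, p i * h i) ^ 2 with hVpdef
  set Vq := ∑ i, q i * h i ^ 2 - (∑ i, q i * h i) ^ 2 with hVqdef
  set D := ∑ i, (p i - q i) * h i with hDdef
  set t := γ / n with htdef
  have ht : 0 < t := div_pos hγ hn0
  -- nonnegativity of Vq (Cauchy-Schwarz)
  have hVq0 : 0 ≤ Vq := by
    have key : (∑ i, q i * h i) ^ 2 ≤ (∑ i, q i) * (∑ i, q i * h i ^ 2) := by
      calc (∑ i, q i * h i) ^ 2
          = (∑ i, Real.sqrt (q i) * (Real.sqrt (q i) * h i)) ^ 2 := by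
            congr 1
            exact Finset.sum_congr rfl fun i _ => by
              rw [← mul_assoc, Real.mul_self_sqrt (hq0 i)]
        _ ≤ (∑ i, Real.sqrt (q i) ^ 2) * (∑ i, (Real.sqrt (q i) * h i) ^ 2) :=
            Finset.sum_mul_sq_le_sq_mul_sq _ _ _
        _ = (∑ i, q i) * (∑ i, q i * h i ^ 2) := by
            congr 1
            · exact Finset.sum_congr rfl fun i _ => Real.sq_sqrt (hq0 i)
            · exact Finset.sum_congr rfl fun i _ => by
                rw [mul_pow, Real.sq_sqrt (hq0 i)]
    rw [hq1, one_mul] at key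
    simp only [hVqdef]
    linarith
  -- rewrite hypotheses in terms of t
  have hdev' : |D| ≤ 2 * Real.sqrt (Vp * t) + 2 * H * t := by
    have e1 : Vp * t = Vp * γ / n := by rw [htdef]; ring
    have e2 : 2 * H * t = 2 * H * γ / n := by rw [htdef]; ring
    rw [e1, e2]; exact hdev
  have hvar' : |Vp - Vq| ≤ H ^ 2 * (2 * Real.sqrt t + 2 * t) := by
    have e : H ^ 2 * (2 * Real.sqrt t + 2 * t) = H ^ 2 * (2 * Real.sqrt (γ/n) + 2 * γ / n) := by
      rw [htdef]; ring
    rw [e]; exact hvar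
  -- split the sqrt
  have h1 : Real.sqrt (Vp * t) ≤ Real.sqrt (Vq * t) + Real.sqrt (|Vp - Vq| * t) := by
    have hle : Vp * t ≤ Vq * t + |Vp - Vq| * t := by
      have := le_abs_self (Vp - Vq)
      nlinarith [ht.le]
    calc Real.sqrt (Vp * t) ≤ Real.sqrt (Vq * t + |Vp - Vq| * t) := Real.sqrt_le_sqrt hle
      _ ≤ Real.sqrt (Vq * t) + Real.sqrt (|Vp - Vq| * t) :=
          sqrt_add_le' _ _ (mul_nonneg hVq0 ht.le) (mul_nonneg (abs_nonneg _) ht.le)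
  -- rpow facts
  have ht34 : Real.sqrt (Real.sqrt t * t) = t ^ ((3:ℝ)/4) := by
    have e1 : Real.sqrt t * t = t ^ ((3:ℝ)/2) := by
      rw [Real.sqrt_eq_rpow, show ((3:ℝ)/2) = 1/2 + 1 by norm_num,
        Real.rpow_add ht, Real.rpow_one]
    rw [e1, Real.sqrt_eq_rpow, ← Real.rpow_mul ht.le]
    norm_num
  -- bound the error sqrt
  have h2 : Real.sqrt (|Vp - Vq| * t) ≤ H * Real.sqrt 2 * (t ^ ((3:ℝ)/4) + t) := by
    have hle : |Vp - Vq| * t ≤ H ^ 2 * (2 * Real.sqrt t + 2 * t) * t :=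
      mul_le_mul_of_nonneg_right hvar' ht.le
    have hsum : H ^ 2 * (2 * Real.sqrt t + 2 * t) * t
        = H ^ 2 * (2 * (Real.sqrt t * t)) + H ^ 2 * (2 * t ^ 2) := by ring
    calc Real.sqrt (|Vp - Vq| * t) ≤ Real.sqrt (H ^ 2 * (2 * (Real.sqrt t * t)) + H ^ 2 * (2 * t ^ 2)) := by
          rw [← hsum]; exact Real.sqrt_le_sqrt hle
      _ ≤ Real.sqrt (H ^ 2 * (2 * (Real.sqrt t * t))) + Real.sqrt (H ^ 2 * (2 * t ^ 2)) := by
          apply sqrt_add_le'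
          · positivity
          · positivity
      _ = H * Real.sqrt 2 * (t ^ ((3:ℝ)/4) + t) := by
          rw [Real.sqrt_mul (by positivity : (0:ℝ) ≤ H ^ 2), Real.sqrt_mul (by positivity : (0:ℝ) ≤ H ^ 2),
            Real.sqrt_mul (by norm_num : (0:ℝ) ≤ 2), Real.sqrt_mul (by norm_num : (0:ℝ) ≤ 2),
            Real.sqrt_sq hH.le, Real.sqrt_sq ht.le, ht34]
          ring
  -- rewrite goal in terms of t
  have egoal1 : Vq * γ / n = Vq * t := by rw [htdef]; ring
  have egoal2 : 12 * H * γ / n = 12 * H * t := by rw [htdef]; ring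
  have egoal3 : 10 * H * γ ^ ((3:ℝ)/4) / n ^ ((3:ℝ)/4) = 10 * H * t ^ ((3:ℝ)/4) := by
    rw [htdef, Real.div_rpow hγ.le hn0.le]; ring
  rw [egoal1, egoal2, egoal3]
  have hs2 : Real.sqrt 2 ≤ 2 := by
    nlinarith [Real.sq_sqrt (by norm_num : (0:ℝ) ≤ 2), Real.sqrt_nonneg 2]
  have ht34nn : 0 ≤ t ^ ((3:ℝ)/4) := Real.rpow_nonneg ht.le _
  nlinarith [hdev', h1, h2, Real.sqrt_nonneg 2, mul_nonneg hH.le ht34nn, mul_nonneg hH.le ht.le]
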